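/- Let d ≥ 1 and let E : M_d(ℂ) → M_d(ℂ) be a trace-preserving linear map. Then E is positive (i.e., maps positive semidefinite matrices to positive semidefinite matrices) if and only if for every Hermitian matrix Δ ∈ M_d(ℂ) one has ‖E(Δ)‖₁ ≤ ‖Δ‖₁. -/

import Mathlib

open Matrix Kronecker
open scoped ComplexOrder

/-- The positive semidefinite square root of a positive semidefinite matrix
(the definition `Matrix.PosSemidef.sqrt` of the older Mathlib, since removed). -/
noncomputable def Matrix.PosSemidef.sqrt {n : Type*} [Fintype n] [DecidableEq n]
    {A : Matrix n n ℂ} (hA : A.PosSemidef) : Matrix n n ℂ :=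
  hA.1.eigenvectorUnitary.1 * diagonal ((↑) ∘ (Real.sqrt ∘ hA.1.eigenvalues)) *
  (star hA.1.eigenvectorUnitary : Matrix n n ℂ)

/-- The trace norm of a complex matrix: the trace of the positive semidefinite
square root of `Aᴴ * A`. -/
noncomputable def traceNorm {n : Type*} [Fintype n] [DecidableEq n]
    (A : Matrix n n ℂ) : ℝ :=
  ((Matrix.posSemidef_conjTranspose_mul_self A).sqrt.trace).re

/-- A state: a positive semidefinite matrix of trace one. -/
def IsState {n : Type*} [Fintype n] [DecidableEq n] (ρ : Matrix n n ℂ) : Prop :=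
  ρ.PosSemidef ∧ ρ.trace = 1

/-- A trace-preserving linear map on matrices. -/
def TracePreserving {d : ℕ} (Φ : Matrix (Fin d) (Fin d) ℂ →ₗ[ℂ] Matrix (Fin d) (Fin d) ℂ) : Prop :=
  ∀ A, (Φ A).trace = A.trace

/-- A Hermiticity-preserving linear map on matrices. -/
def HermPreserving {d : ℕ} (Φ : Matrix (Fin d) (Fin d) ℂ →ₗ[ℂ] Matrix (Fin d) (Fin d) ℂ) : Prop :=
  ∀ A, Φ Aᴴ = (Φ A)ᴴ

/-- The ampliation `I_n ⊗ Φ` of a linear map `Φ` on `d × d` matrices, acting blockwise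
on `n × n` block matrices with `d × d` blocks. -/
def ampliation {n d : ℕ} (Φ : Matrix (Fin d) (Fin d) ℂ →ₗ[ℂ] Matrix (Fin d) (Fin d) ℂ)
    (A : Matrix (Fin n × Fin d) (Fin n × Fin d) ℂ) :
    Matrix (Fin n × Fin d) (Fin n × Fin d) ℂ :=
  Matrix.of fun p q => Φ (Matrix.of fun i j => A (p.1, i) (q.1, j)) p.2 q.2

/-- A positive map: maps positive semidefinite matrices to positive semidefinite matrices. -/
def PositiveMap {d : ℕ} (Φ : Matrix (Fin d) (Fin d) ℂ →ₗ[ℂ] Matrix (Fin d) (Fin d) ℂ) : Prop :=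
  ∀ A, A.PosSemidef → (Φ A).PosSemidef

/-- A completely positive map: every ampliation `I_n ⊗ Φ` is a positive map. -/
def CompletelyPositive {d : ℕ}
    (Φ : Matrix (Fin d) (Fin d) ℂ →ₗ[ℂ] Matrix (Fin d) (Fin d) ℂ) : Prop :=
  ∀ n : ℕ, 1 ≤ n → ∀ A : Matrix (Fin n × Fin d) (Fin n × Fin d) ℂ,
    A.PosSemidef → (ampliation Φ A).PosSemidef

/-- A separable state on `ℂ^m ⊗ ℂ^d`: a finite convex combination of product states. -/
def SeparableState {m d : ℕ} (ρ : Matrix (Fin m × Fin d) (Fin m × Fin d) ℂ) : Prop :=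
  ∃ (k : ℕ) (w : Fin k → ℝ) (σ : Fin k → Matrix (Fin m) (Fin m) ℂ)
    (τ : Fin k → Matrix (Fin d) (Fin d) ℂ),
    (∀ i, 0 ≤ w i) ∧ (∑ i, w i) = 1 ∧ (∀ i, IsState (σ i)) ∧ (∀ i, IsState (τ i)) ∧
    ρ = ∑ i, (w i : ℂ) • (σ i ⊗ₖ τ i)
section TNPAux
open scoped MatrixOrder
variable {n : Type*} [Fintype n] [DecidableEq n]

lemma Matrix.IsHermitian.spectral_theorem' {A : Matrix n n ℂ} (hA : A.IsHermitian) :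
    A = (hA.eigenvectorUnitary : Matrix n n ℂ) * diagonal (RCLike.ofReal ∘ hA.eigenvalues) *
      star (hA.eigenvectorUnitary : Matrix n n ℂ) := by
  have := hA.spectral_theorem
  rw [Unitary.conjStarAlgAut_apply] at this
  exact this

lemma Matrix.IsHermitian.star_mul_self_mul_eq_diagonal {A : Matrix n n ℂ} (hA : A.IsHermitian) :
    star (hA.eigenvectorUnitary : Matrix n n ℂ) * A * (hA.eigenvectorUnitary : Matrix n n ℂ) =
      diagonal (RCLike.ofReal ∘ hA.eigenvalues) := by
  have h1 : star (hA.eigenvectorUnitary : Matrix n n ℂ) * (hA.eigenvectorUnitary : Matrix n n ℂ)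
      = 1 := Unitary.coe_star_mul_self _
  have hs := hA.spectral_theorem'
  set U := (hA.eigenvectorUnitary : Matrix n n ℂ)
  set D : Matrix n n ℂ := diagonal (RCLike.ofReal ∘ hA.eigenvalues)
  clear_value U D
  rw [hs]
  simp only [← mul_assoc, h1, one_mul]
  rw [mul_assoc, h1, mul_one]

lemma Matrix.PosSemidef.sqrt_eq_cfcSqrt {A : Matrix n n ℂ} (hA : A.PosSemidef) :
    hA.sqrt = CFC.sqrt A := by
  have h0 : (0 : Matrix n n ℂ) ≤ A := Matrix.nonneg_iff_posSemidef.mpr hA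
  rw [CFC.sqrt_eq_real_sqrt A h0, cfcₙ_eq_cfc, hA.1.cfc_eq Real.sqrt, Matrix.IsHermitian.cfc,
    Unitary.conjStarAlgAut_apply]
  rfl

lemma Matrix.PosSemidef.posSemidef_sqrt {A : Matrix n n ℂ} (hA : A.PosSemidef) :
    hA.sqrt.PosSemidef := by
  rw [hA.sqrt_eq_cfcSqrt]
  exact Matrix.nonneg_iff_posSemidef.mp (CFC.sqrt_nonneg A)

lemma Matrix.PosSemidef.eq_sqrt_of_sq_eq {A B : Matrix n n ℂ} (hA : A.PosSemidef)
    (hB : B.PosSemidef) (h : A ^ 2 = B) : A = hB.sqrt := by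
  rw [hB.sqrt_eq_cfcSqrt]
  exact (CFC.sqrt_unique (by rw [← h, pow_two]) (Matrix.nonneg_iff_posSemidef.mpr hA)).symm

end TNPAux

namespace TNP

variable {n : Type*} [Fintype n] [DecidableEq n]

lemma trace_conj_unitary {U D : Matrix n n ℂ} (hU : U ∈ Matrix.unitaryGroup n ℂ) :
    (U * D * star U).trace = D.trace := by
  rw [Matrix.trace_mul_cycle, Matrix.mem_unitaryGroup_iff'.mp hU, one_mul]

lemma traceNorm_of_posSemidef {A : Matrix n n ℂ} (hA : A.PosSemidef) :
    traceNorm A = A.trace.re := by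
  have h : A = (Matrix.posSemidef_conjTranspose_mul_self A).sqrt :=
    hA.eq_sqrt_of_sq_eq _ (by rw [pow_two, hA.1.eq])
  rw [traceNorm, ← h]

set_option maxHeartbeats 1000000 in
lemma key (Y : Matrix n n ℂ) :
    Y.trace.re ≤ traceNorm Y ∧ (traceNorm Y ≤ Y.trace.re → Y.PosSemidef) := by
  set hH : (Yᴴ * Y).PosSemidef := Matrix.posSemidef_conjTranspose_mul_self Y with hHdef
  set U : Matrix n n ℂ := (hH.1.eigenvectorUnitary : Matrix n n ℂ) with hUdef
  have hUmem : U ∈ Matrix.unitaryGroup n ℂ := (hH.1.eigenvectorUnitary).2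
  have hU1 : U * Uᴴ = 1 := by
    have := Matrix.mem_unitaryGroup_iff.mp hUmem
    rwa [Matrix.star_eq_conjTranspose] at this
  set lam : n → ℝ := hH.1.eigenvalues with hlam
  have hlamnn : ∀ i, 0 ≤ lam i := hH.eigenvalues_nonneg
  set Z : Matrix n n ℂ := Uᴴ * Y * U with hZdef
  have hsq' : hH.sqrt = U * diagonal (Complex.ofReal ∘ Real.sqrt ∘ lam) * star U := by
    rw [hUdef, hlam]
    unfold Matrix.PosSemidef.sqrt
    rfl
  have h3 : traceNorm Y = ((hH.sqrt).trace).re := rfl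
  have hsqPSD : (hH.sqrt).PosSemidef := hH.posSemidef_sqrt
  have hd := hH.1.star_mul_self_mul_eq_diagonal
  rw [Matrix.star_eq_conjTranspose] at hd
  rw [← hUdef, ← hlam] at hd
  set S : Matrix n n ℂ := hH.sqrt with hSdef
  clear_value Z S
  clear_value U lam hH
  clear hUdef hlam hHdef hSdef
  have cancel : ∀ X : Matrix n n ℂ, U * (Uᴴ * X) = X := fun X => by
    rw [← mul_assoc, hU1, one_mul]
  have hYZ : U * Z * Uᴴ = Y := by
    rw [hZdef]
    simp only [mul_assoc, cancel, hU1, mul_one]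
  have hZZ : Zᴴ * Z = diagonal (RCLike.ofReal ∘ lam) := by
    rw [hZdef]
    simp only [conjTranspose_mul, conjTranspose_conjTranspose, mul_assoc, cancel]
    rw [← hd]
    simp only [mul_assoc]
  have hcol : ∀ i, ∑ k, Complex.normSq (Z k i) = lam i := by
    intro i
    have h1 := congrFun (congrFun hZZ i) i
    rw [Matrix.mul_apply, Matrix.diagonal_apply_eq] at h1
    simp only [Matrix.conjTranspose_apply, Matrix.star_apply, RCLike.star_def] at h1
    have h2 := congrArg Complex.re h1
    rw [Complex.re_sum] at h2
    simpa [← Complex.normSq_eq_conj_mul_self] using h2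
  have hterm : ∀ i, (Z i i).re ≤ Real.sqrt (lam i) := by
    intro i
    have h1 : Complex.normSq (Z i i) ≤ lam i := by
      rw [← hcol i]
      exact Finset.single_le_sum (f := fun k => Complex.normSq (Z k i))
        (fun k _ => Complex.normSq_nonneg _) (Finset.mem_univ i)
    calc (Z i i).re ≤ ‖Z i i‖ := Complex.re_le_norm _
      _ = Real.sqrt (Complex.normSq (Z i i)) := Complex.norm_def _
      _ ≤ Real.sqrt (lam i) := Real.sqrt_le_sqrt h1
  have htrace : traceNorm Y = ∑ i, Real.sqrt (lam i) := by
    rw [h3, hsq', trace_conj_unitary hUmem, Matrix.trace_diagonal, Complex.re_sum]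
    simp
  have hre : Y.trace.re = ∑ i, (Z i i).re := by
    rw [← hYZ, ← Matrix.star_eq_conjTranspose U, trace_conj_unitary hUmem]
    show (∑ i, Z i i).re = _
    rw [Complex.re_sum]
  constructor
  · rw [hre, htrace]
    exact Finset.sum_le_sum fun i _ => hterm i
  · intro hle
    have hsum : ∑ i, (Z i i).re = ∑ i, Real.sqrt (lam i) := by
      refine le_antisymm (Finset.sum_le_sum fun i _ => hterm i) ?_
      rw [← hre, ← htrace]; exact hle
    have heq : ∀ i ∈ Finset.univ, (Z i i).re = Real.sqrt (lam i) :=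
      (Finset.sum_eq_sum_iff_of_le fun i _ => hterm i).mp hsum
    have hdiagSq : ∀ i, Complex.normSq (Z i i) = lam i := by
      intro i
      refine le_antisymm ?_ ?_
      · rw [← hcol i]
        exact Finset.single_le_sum (f := fun k => Complex.normSq (Z k i))
          (fun k _ => Complex.normSq_nonneg _) (Finset.mem_univ i)
      · have h4 : (Z i i).re ^ 2 ≤ Complex.normSq (Z i i) := by
          rw [Complex.normSq_apply]; nlinarith [sq_nonneg (Z i i).im]
        rw [heq i (Finset.mem_univ i), Real.sq_sqrt (hlamnn i)] at h4
        exact h4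
    have hZdiag : Z = diagonal (Complex.ofReal ∘ Real.sqrt ∘ lam) := by
      ext k i
      by_cases hk : k = i
      · subst hk
        rw [Matrix.diagonal_apply_eq]
        have him : (Z k k).im = 0 := by
          have h1 := hdiagSq k
          rw [Complex.normSq_apply] at h1
          have h2 : (Z k k).re ^ 2 = lam k := by
            rw [heq k (Finset.mem_univ k), Real.sq_sqrt (hlamnn k)]
          nlinarith [sq_nonneg (Z k k).im]
        apply Complex.ext
        · rw [heq k (Finset.mem_univ k)]; simp
        · rw [him]; simp
      · rw [Matrix.diagonal_apply_ne _ hk]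
        have h0 : ∑ j ∈ Finset.univ.erase i, Complex.normSq (Z j i) = 0 := by
          have h5 := Finset.add_sum_erase Finset.univ
            (fun j => Complex.normSq (Z j i)) (Finset.mem_univ i)
          have h6 := hcol i
          have h7 := hdiagSq i
          linarith
        have h8 := (Finset.sum_eq_zero_iff_of_nonneg
          (fun j _ => Complex.normSq_nonneg (Z j i))).mp h0 k
          (Finset.mem_erase.mpr ⟨hk, Finset.mem_univ k⟩)
        exact Complex.normSq_eq_zero.mp h8
    have hY : Y = S := by
      rw [hsq', Matrix.star_eq_conjTranspose, ← hZdiag]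
      exact hYZ.symm
    exact hY ▸ hsqPSD

lemma rclike_ofReal_eq : (RCLike.ofReal : ℝ → ℂ) = Complex.ofReal := rfl

lemma diag_nonneg {M : Matrix n n ℂ} (hM : M.PosSemidef) (i : n) :
    0 ≤ M i i := by
  exact hM.diag_nonneg

lemma diag_re_nonneg {M : Matrix n n ℂ} (hM : M.PosSemidef) (i : n) :
    0 ≤ (M i i).re :=
  (Complex.le_def.mp (diag_nonneg hM i)).1

lemma conj_mul_unitary {U : Matrix n n ℂ} (A B : Matrix n n ℂ) (hU : Uᴴ * U = 1) :
    (U * A * Uᴴ) * (U * B * Uᴴ) = U * (A * B) * Uᴴ := by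
  have cancel : ∀ X : Matrix n n ℂ, Uᴴ * (U * X) = X := fun X => by
    rw [← mul_assoc, hU, one_mul]
  simp only [mul_assoc, cancel]

lemma psd_conj {U : Matrix n n ℂ} (f : n → ℝ) (hf : ∀ i, 0 ≤ f i) :
    (U * diagonal (Complex.ofReal ∘ f) * Uᴴ).PosSemidef := by
  refine Matrix.PosSemidef.mul_mul_conjTranspose_same ?_ U
  refine Matrix.PosSemidef.diagonal fun i => ?_
  simp only [Function.comp_apply, Pi.zero_apply]
  rw [Complex.zero_le_real]
  exact hf i

set_option maxHeartbeats 1000000 in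
lemma traceNorm_hermitian {Δ : Matrix n n ℂ} (hΔ : Δ.IsHermitian) :
    traceNorm Δ = ∑ i, |hΔ.eigenvalues i| := by
  set U : Matrix n n ℂ := (hΔ.eigenvectorUnitary : Matrix n n ℂ) with hUdef
  have hUmem : U ∈ Matrix.unitaryGroup n ℂ := (hΔ.eigenvectorUnitary).2
  have hU1 : U * Uᴴ = 1 := by
    have := Matrix.mem_unitaryGroup_iff.mp hUmem
    rwa [Matrix.star_eq_conjTranspose] at this
  have hU2 : Uᴴ * U = 1 := by
    have := Matrix.mem_unitaryGroup_iff'.mp hUmem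
    rwa [Matrix.star_eq_conjTranspose] at this
  set mu : n → ℝ := hΔ.eigenvalues with hmu
  have hspec : Δ = U * diagonal (Complex.ofReal ∘ mu) * Uᴴ := by
    have := hΔ.spectral_theorem'
    rwa [Matrix.star_eq_conjTranspose, ← hUdef, ← hmu] at this
  clear_value U mu
  set S : Matrix n n ℂ := U * diagonal (Complex.ofReal ∘ fun i => |mu i|) * Uᴴ with hSdef
  have hS : S.PosSemidef := psd_conj _ fun i => abs_nonneg _
  have hDD : diagonal (Complex.ofReal ∘ fun i => |mu i|) *
      diagonal (Complex.ofReal ∘ fun i => |mu i|) =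
      diagonal (Complex.ofReal ∘ mu) * diagonal (Complex.ofReal ∘ mu) := by
    rw [diagonal_mul_diagonal, diagonal_mul_diagonal]
    refine congrArg diagonal (funext fun i => ?_)
    simp only [Function.comp_apply]
    rw [← Complex.ofReal_mul, ← Complex.ofReal_mul, abs_mul_abs_self]
  have hSsq : S ^ 2 = Δᴴ * Δ := by
    rw [pow_two, hΔ.eq, hSdef, conj_mul_unitary _ _ hU2, hDD, ← conj_mul_unitary _ _ hU2,
      ← hspec]
  have hsqrt : S = (Matrix.posSemidef_conjTranspose_mul_self Δ).sqrt :=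
    hS.eq_sqrt_of_sq_eq _ hSsq
  have h3 : traceNorm Δ = (S.trace).re := by rw [traceNorm, ← hsqrt]
  rw [h3, hSdef, ← Matrix.star_eq_conjTranspose U, trace_conj_unitary hUmem,
    Matrix.trace_diagonal, Complex.re_sum]
  simp

set_option maxHeartbeats 1000000 in
lemma jordan {Δ : Matrix n n ℂ} (hΔ : Δ.IsHermitian) :
    ∃ P N : Matrix n n ℂ, P.PosSemidef ∧ N.PosSemidef ∧ Δ = P - N ∧
      traceNorm Δ = P.trace.re + N.trace.re := by
  have htn := traceNorm_hermitian hΔ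
  set U : Matrix n n ℂ := (hΔ.eigenvectorUnitary : Matrix n n ℂ) with hUdef
  have hUmem : U ∈ Matrix.unitaryGroup n ℂ := (hΔ.eigenvectorUnitary).2
  set mu : n → ℝ := hΔ.eigenvalues with hmu
  have hspec : Δ = U * diagonal (Complex.ofReal ∘ mu) * Uᴴ := by
    have := hΔ.spectral_theorem'
    rwa [Matrix.star_eq_conjTranspose, ← hUdef, ← hmu] at this
  clear_value U mu
  refine ⟨U * diagonal (Complex.ofReal ∘ fun i => max (mu i) 0) * Uᴴ,
    U * diagonal (Complex.ofReal ∘ fun i => max (-mu i) 0) * Uᴴ,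
    psd_conj _ fun i => le_max_right _ _, psd_conj _ fun i => le_max_right _ _, ?_, ?_⟩
  · have hD : diagonal (Complex.ofReal ∘ fun i => max (mu i) 0) -
        diagonal (Complex.ofReal ∘ fun i => max (-mu i) 0) =
        diagonal (Complex.ofReal ∘ mu) := by
      rw [diagonal_sub]
      refine congrArg diagonal (funext fun i => ?_)
      simp only [Pi.sub_apply, Function.comp_apply]
      rw [← Complex.ofReal_sub, max_zero_sub_max_neg_zero_eq_self]
    rw [hspec, ← Matrix.sub_mul, ← Matrix.mul_sub, hD]
  · rw [htn]
    rw [← Matrix.star_eq_conjTranspose U, trace_conj_unitary hUmem, trace_conj_unitary hUmem,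
      Matrix.trace_diagonal, Matrix.trace_diagonal, Complex.re_sum, Complex.re_sum,
      ← Finset.sum_add_distrib]
    refine Finset.sum_congr rfl fun i _ => ?_
    simp only [Function.comp_apply, Complex.ofReal_re]
    rcases le_total 0 (mu i) with h | h
    · rw [abs_of_nonneg h, max_eq_left h, max_eq_right (by linarith)]
      ring
    · rw [abs_of_nonpos h, max_eq_right h, max_eq_left (by linarith)]
      ring

set_option maxHeartbeats 1000000 in
lemma traceNorm_sub_le {A B : Matrix n n ℂ} (hA : A.PosSemidef) (hB : B.PosSemidef) :
    traceNorm (A - B) ≤ A.trace.re + B.trace.re := by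
  have hX : (A - B).IsHermitian := hA.1.sub hB.1
  rw [traceNorm_hermitian hX]
  set U : Matrix n n ℂ := (hX.eigenvectorUnitary : Matrix n n ℂ) with hUdef
  have hUmem : U ∈ Matrix.unitaryGroup n ℂ := (hX.eigenvectorUnitary).2
  have hU1 : U * Uᴴ = 1 := by
    have := Matrix.mem_unitaryGroup_iff.mp hUmem
    rwa [Matrix.star_eq_conjTranspose] at this
  set mu : n → ℝ := hX.eigenvalues with hmu
  have hd := hX.star_mul_self_mul_eq_diagonal
  rw [Matrix.star_eq_conjTranspose, ← hUdef, ← hmu] at hd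
  clear_value U mu
  have hA' : (Uᴴ * A * U).PosSemidef := hA.conjTranspose_mul_mul_same U
  have hB' : (Uᴴ * B * U).PosSemidef := hB.conjTranspose_mul_mul_same U
  have hdiff : Uᴴ * A * U - Uᴴ * B * U = diagonal (RCLike.ofReal ∘ mu) := by
    rw [← hd, Matrix.mul_sub, Matrix.sub_mul]
  have hterm : ∀ i, |mu i| ≤ ((Uᴴ * A * U) i i).re + ((Uᴴ * B * U) i i).re := by
    intro i
    have h1 := congrFun (congrFun hdiff i) i
    rw [Matrix.diagonal_apply_eq] at h1
    have h2 := congrArg Complex.re h1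
    simp only [Matrix.sub_apply, Complex.sub_re, Function.comp_apply, rclike_ofReal_eq,
      Complex.ofReal_re] at h2
    rw [← h2]
    have ha := diag_re_nonneg hA' i
    have hb := diag_re_nonneg hB' i
    exact abs_le.mpr ⟨by linarith, by linarith⟩
  have htr : ∀ M : Matrix n n ℂ, (Uᴴ * M * U).trace = M.trace := by
    intro M
    rw [Matrix.trace_mul_cycle, hU1, one_mul]
  have htrre : ∀ M : Matrix n n ℂ, M.trace.re = ∑ i, (M i i).re := fun M => by
    show (∑ i, M i i).re = _
    rw [Complex.re_sum]
  calc ∑ i, |mu i| ≤ ∑ i, (((Uᴴ * A * U) i i).re + ((Uᴴ * B * U) i i).re) :=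
        Finset.sum_le_sum fun i _ => hterm i
    _ = (Uᴴ * A * U).trace.re + (Uᴴ * B * U).trace.re := by
        rw [Finset.sum_add_distrib, htrre, htrre]
    _ = A.trace.re + B.trace.re := by rw [htr A, htr B]

end TNP

/-- Theorem (Kossakowski; Ruskai): a trace-preserving linear map on `M_d(ℂ)` is positive
iff it contracts the trace norm on Hermitian matrices. -/
theorem positive_iff_trace_norm_contraction_on_hermitian (d : ℕ) (hd : 1 ≤ d)
    (E : Matrix (Fin d) (Fin d) ℂ →ₗ[ℂ] Matrix (Fin d) (Fin d) ℂ)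
    (hTP : TracePreserving E) :
    PositiveMap E ↔
      ∀ Δ : Matrix (Fin d) (Fin d) ℂ, Δ.IsHermitian → traceNorm (E Δ) ≤ traceNorm Δ := by
  constructor
  · intro hpos Δ hΔ
    obtain ⟨P, N, hP, hN, hPN, htn⟩ := TNP.jordan hΔ
    have hE : E Δ = E P - E N := by rw [hPN, map_sub]
    have h1 : traceNorm (E Δ) ≤ (E P).trace.re + (E N).trace.re := by
      rw [hE]; exact TNP.traceNorm_sub_le (hpos P hP) (hpos N hN)
    rwa [hTP P, hTP N, ← htn] at h1
  · intro hc A hA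
    have h1 := hc A hA.1
    rw [TNP.traceNorm_of_posSemidef hA] at h1
    have h2 : (E A).trace.re = A.trace.re := by rw [hTP A]
    exact (TNP.key (E A)).2 (h1.trans_eq h2.symm)
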